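/- arXiv:2410.16865 — 3 statements merged into one kernel-verified Lean document; each statement's English description precedes it below -/
import Mathlib

section
/- Let p : ZMod 4 → ℤ³ be a cyclic sequence of four points such that (i) for every i, the edge vector d i := p(i+1) − p(i) has exactly one nonzero coordinate, and (ii) for every i, the two edge vectors emanating from the vertex p(i), namely p(i+1) − p(i) and p(i−1) − p(i), do not point in the same signed axis direction (equivalently, their dot product is not positive). Then the quadrilateral p(0)p(1)p(2)p(3) is an axis-aligned rectangle: for every i, d(i+2) = −d(i), and the nonzero coordinates of d(i) and d(i+1) lie in distinct positions (equivalently, the dot product of d(i) and d(i+1) is zero). -/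
/-- Every face of a polycube is an axis-aligned rectangle: if `p : ZMod 4 → ℤ³`
is a cyclic quadrilateral whose edge vectors each have exactly one nonzero
coordinate, and the two edge vectors emanating from each vertex do not point in
the same signed axis direction (their dot product is not positive), then
opposite edge vectors are negatives of each other and consecutive edge vectors
are orthogonal. -/
theorem polycube_face_is_axis_aligned_rectangle
    (p : ZMod 4 → (Fin 3 → ℤ))
    (hone : ∀ i : ZMod 4, ∃! j : Fin 3, (p (i + 1) - p i) j ≠ 0)
    (hnot : ∀ i : ZMod 4,
      ¬ 0 < ∑ j : Fin 3, (p (i + 1) - p i) j * (p (i - 1) - p i) j) :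
    ∀ i : ZMod 4,
      (p (i + 2 + 1) - p (i + 2)) = -(p (i + 1) - p i) ∧
      ∑ j : Fin 3, (p (i + 1) - p i) j * (p (i + 1 + 1) - p (i + 1)) j = 0 := by
  set d : ZMod 4 → Fin 3 → ℤ := fun i => p (i + 1) - p i with hd
  -- index arithmetic helper
  have hidx : ∀ (c c' c'' : ZMod 4), c + c' = c'' → ∀ i : ZMod 4, i + c + c' = i + c'' := by
    intro c c' c'' h i; rw [add_assoc, h]
  -- the axis function
  choose a ha hu using hone
  have hz : ∀ i (j : Fin 3), j ≠ a i → d i j = 0 := by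
    intro i j hj
    by_contra h
    exact hj (hu i j h)
  -- telescoping sum of the four edge vectors is zero
  have hsum : ∀ (i : ZMod 4) (j : Fin 3),
      d i j + d (i + 1) j + d (i + 2) j + d (i + 3) j = 0 := by
    intro i j
    simp only [hd]
    rw [hidx 1 1 2 (by decide) i, hidx 2 1 3 (by decide) i, hidx 3 1 0 (by decide) i,
      add_zero]
    simp only [Pi.sub_apply]
    ring
  -- dot product reduction
  have hdot : ∀ i k : ZMod 4, ∑ j : Fin 3, d i j * d k j = d i (a i) * d k (a i) := by
    intro i k
    apply Finset.sum_eq_single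
    · intro b _ hb
      rw [hz i b hb, zero_mul]
    · intro h; exact absurd (Finset.mem_univ _) h
  -- the nonnegativity condition on consecutive edges
  have hH : ∀ i : ZMod 4, 0 ≤ d i (a i) * d (i + 3) (a i) := by
    intro i
    have h1 := hnot i
    have e1 : i - 1 = i + 3 := by
      rw [sub_eq_add_neg]; exact congrArg (i + ·) (by decide)
    have e2 : i + 3 + 1 = i := by rw [hidx 3 1 0 (by decide) i, add_zero]
    have e3 : ∀ j, (p (i - 1) - p i) j = -(d (i + 3) j) := by
      intro j
      simp only [hd, e1, e2, Pi.sub_apply]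
      ring
    have e4 : ∑ j : Fin 3, (p (i + 1) - p i) j * (p (i - 1) - p i) j
        = -(d i (a i) * d (i + 3) (a i)) := by
      rw [← hdot i (i + 3), ← Finset.sum_neg_distrib]
      apply Finset.sum_congr rfl
      intro j _
      rw [e3 j]
      simp only [hd]
      ring
    rw [e4] at h1
    linarith
  -- strict version when axes coincide
  have hHS : ∀ i : ZMod 4, a (i + 3) = a i → 0 < d i (a i) * d (i + 3) (a i) := by
    intro i h
    refine lt_of_le_of_ne (hH i) (Ne.symm (mul_ne_zero (ha i) ?_))
    rw [← h]; exact ha (i + 3)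
  -- consecutive edges have distinct axes
  have hA : ∀ i : ZMod 4, a (i + 1) ≠ a i := by
    intro i h
    -- the four consecutive products
    have e14 : i + 1 + 3 = i + 0 := hidx 1 3 0 (by decide) i
    have e24 : i + 2 + 3 = i + 1 := hidx 2 3 1 (by decide) i
    have e34 : i + 3 + 3 = i + 2 := hidx 3 3 2 (by decide) i
    rw [add_zero] at e14
    have h10 : 0 < d (i + 1) (a i) * d i (a i) := by
      have := hHS (i + 1)
      rw [e14, h] at this
      exact this rfl
    have hs := hsum i (a i)
    by_cases h2 : a (i + 2) = a i
    · have h21 : 0 < d (i + 2) (a i) * d (i + 1) (a i) := by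
        have := hHS (i + 2)
        rw [e24, h2, h] at this
        exact this rfl
      by_cases h3 : a (i + 3) = a i
      · have h32 : 0 < d (i + 3) (a i) * d (i + 2) (a i) := by
          have := hHS (i + 3)
          rw [e34, h3, h2] at this
          exact this rfl
        rcases mul_pos_iff.mp h10 with ⟨x1, x0⟩ | ⟨x1, x0⟩ <;>
          rcases mul_pos_iff.mp h21 with ⟨y2, y1⟩ | ⟨y2, y1⟩ <;>
          rcases mul_pos_iff.mp h32 with ⟨z3, z2⟩ | ⟨z3, z2⟩ <;> linarith
      · rw [hz (i + 3) (a i) (fun e => h3 e.symm)] at hs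
        rcases mul_pos_iff.mp h10 with ⟨x1, x0⟩ | ⟨x1, x0⟩ <;>
          rcases mul_pos_iff.mp h21 with ⟨y2, y1⟩ | ⟨y2, y1⟩ <;> linarith
    · rw [hz (i + 2) (a i) (fun e => h2 e.symm)] at hs
      by_cases h3 : a (i + 3) = a i
      · have h03 : 0 < d i (a i) * d (i + 3) (a i) := hHS i h3
        rcases mul_pos_iff.mp h10 with ⟨x1, x0⟩ | ⟨x1, x0⟩ <;>
          rcases mul_pos_iff.mp h03 with ⟨y0, y3⟩ | ⟨y0, y3⟩ <;> linarith
      · rw [hz (i + 3) (a i) (fun e => h3 e.symm)] at hs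
        rcases mul_pos_iff.mp h10 with ⟨x1, x0⟩ | ⟨x1, x0⟩ <;> linarith
  -- opposite edges have the same axis
  have hB : ∀ i : ZMod 4, a (i + 2) = a i := by
    intro i
    by_contra h2
    have h1 : a (i + 1) ≠ a i := hA i
    have h3 : a (i + 3) ≠ a i := by
      intro h
      have := hA (i + 3)
      rw [hidx 3 1 0 (by decide) i, add_zero, h] at this
      exact this rfl
    have hs := hsum i (a i)
    rw [hz (i + 1) (a i) (fun e => h1 e.symm), hz (i + 2) (a i) (fun e => h2 e.symm), hz (i + 3) (a i) (fun e => h3 e.symm)] at hs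
    simp only [add_zero] at hs
    exact ha i hs
  intro i
  constructor
  · -- d (i+2) = - d i
    have hB' := hB i
    have e21 : i + 2 + 1 = i + 3 := hidx 2 1 3 (by decide) i
    funext j
    show d (i + 2) j = -(d i j)
    by_cases hj : j = a i
    · subst hj
      have hs := hsum i (a i)
      rw [hz (i + 1) (a i) (fun e => hA i e.symm)] at hs
      have h3 : a (i + 3) ≠ a i := by
        intro h
        have := hA (i + 3)
        rw [hidx 3 1 0 (by decide) i, add_zero, h] at this
        exact this rfl
      rw [hz (i + 3) (a i) (fun e => h3 e.symm)] at hs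
      linarith
    · rw [hz i j hj, hz (i + 2) j (by rw [hB']; exact hj), neg_zero]
  · -- orthogonality
    have e11 : i + 1 + 1 = i + 2 := hidx 1 1 2 (by decide) i
    have : ∑ j : Fin 3, d i j * d (i + 1) j = d i (a i) * d (i + 1) (a i) := hdot i (i + 1)
    rw [hz (i + 1) (a i) (fun e => hA i e.symm), mul_zero] at this
    exact this
end

section
/- Let α and β be types, let r : α → α → Prop be a relation with no directed cycle (for every x : α, not Relation.TransGen r x x), let π : β → α be a map, and let u w : β with u ≠ w and π u = π w. Let r' : β → β → Prop be a relation such that for all a b : β, if r' a b then either (a = u and b = w) or r (π a) (π b). Then r' has no directed cycle: for every b : β, it is not the case that Relation.TransGen r' b b. -/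
/-- Splitting a vertex of an acyclic directed graph cannot create a cycle: if
`r` on `α` has no directed cycle, `π : β → α` identifies `u ≠ w` with the same
image, and every edge of `r'` is either the new edge `(u, w)` or projects to an
edge of `r`, then `r'` has no directed cycle. -/
theorem no_cycle_after_vertex_split
    {α β : Type*} (r : α → α → Prop) (r' : β → β → Prop)
    (π : β → α) (u w : β)
    (huw : u ≠ w) (hπ : π u = π w)
    (hacyc : ∀ x : α, ¬ Relation.TransGen r x x)
    (hedge : ∀ a b : β, r' a b → (a = u ∧ b = w) ∨ r (π a) (π b)) :
    ∀ b : β, ¬ Relation.TransGen r' b b := by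
  have key : ∀ a b : β, Relation.TransGen r' a b →
      Relation.TransGen r (π a) (π b) ∨ (a = u ∧ b = w) := by
    intro a b h
    induction h with
    | single h1 =>
      rcases hedge _ _ h1 with h | h
      · exact Or.inr h
      · exact Or.inl (Relation.TransGen.single h)
    | tail _ h1 ih =>
      rename_i b c _
      rcases hedge _ _ h1 with ⟨rfl, rfl⟩ | h
      · rcases ih with ih | ⟨rfl, rfl⟩
        · exact Or.inl (hπ ▸ ih)
        · exact absurd rfl huw
      · rcases ih with ih | ⟨rfl, rfl⟩
        · exact Or.inl (ih.tail h)
        · exact Or.inl (Relation.TransGen.single (hπ ▸ h))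
  intro b hb
  rcases key _ _ hb with h | ⟨rfl, h⟩
  · exact hacyc _ h
  · exact huw h
end

section
/- Consider lists over the type D = Fin 3 × Bool (the six signed axis directions, where the first component is the axis and the second is the sign) satisfying: (i) the list has length exactly 6, (ii) the list has no duplicate entries (so all six directions occur), and (iii) any two cyclically adjacent entries (including the last and the first) have distinct first components (distinct axes). Then the number of equivalence classes of such lists under cyclic rotation (List.IsRotated) is exactly 32. -/
/-- A complex polycube corner configuration: a list over the six signed axis
directions `Fin 3 × Bool` of length exactly 6, without duplicate entries, in
which any two cyclically adjacent entries have distinct axes (distinct first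
components). -/
def IsComplexPolycubeCorner (l : List (Fin 3 × Bool)) : Prop :=
  l.length = 6 ∧ l.Nodup ∧
    ∀ l' : List (Fin 3 × Bool), l.IsRotated l' →
      l'.Chain' (fun a b => a.1 ≠ b.1)

namespace CPCaux

abbrev D := Fin 3 × Bool

def d0 : D := (0, false)

def allSix : List D :=
  [(0, false), (0, true), (1, false), (1, true), (2, false), (2, true)]

/-- Boolean check for the cyclic-adjacency chain condition. -/
def chainB : List D → Bool
  | a :: b :: t => (a.1 != b.1) && chainB (b :: t)
  | _ => true

lemma chainB_iff : ∀ l : List D, chainB l = true ↔ l.Chain' (fun a b => a.1 ≠ b.1)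
  | [] => by simp [chainB, List.Chain']
  | [_] => by simp [chainB, List.Chain']
  | a :: b :: t => by
    show _ ↔ List.IsChain _ _
    rw [List.isChain_cons_cons]
    have := chainB_iff (b :: t)
    simp only [List.Chain'] at this
    rw [← this]
    simp [chainB]

def p (l : List D) : Bool :=
  (l.head? == some d0) && (List.range 7).all fun n => chainB (l.rotate n)

lemma p_iff (l : List D) : p l = true ↔
    (l.head? = some d0 ∧ ∀ n < 7, (l.rotate n).Chain' (fun a b => a.1 ≠ b.1)) := by
  simp [p, chainB_iff]

/-- Decidable characterization. -/
lemma iff_dec (l : List D) :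
    IsComplexPolycubeCorner l ↔
      l.length = 6 ∧ l.Nodup ∧ ∀ n < 7, ((l.rotate n).Chain' (fun a b => a.1 ≠ b.1)) := by
  constructor
  · rintro ⟨h1, h2, h3⟩
    exact ⟨h1, h2, fun n _ => h3 _ ⟨n, rfl⟩⟩
  · rintro ⟨h1, h2, h3⟩
    refine ⟨h1, h2, fun l' hl' => ?_⟩
    obtain ⟨n, hn, rfl⟩ := List.isRotated_iff_mod.1 hl'
    exact h3 n (by omega)

lemma P_rot {l l' : List D} (h : IsComplexPolycubeCorner l) (hr : l.IsRotated l') :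
    IsComplexPolycubeCorner l' :=
  ⟨hr.perm.length_eq ▸ h.1, hr.nodup_iff.1 h.2.1,
    fun l'' h'' => h.2.2 l'' (hr.trans h'')⟩

lemma canon_unique {l₁ l₂ : List D} (h : l₁.IsRotated l₂) (hn : l₁.Nodup)
    (h₁ : l₁.head? = some d0) (h₂ : l₂.head? = some d0) : l₁ = l₂ := by
  obtain ⟨n, hn6, rfl⟩ := List.isRotated_iff_mod.1 h
  have hpos : 0 < l₁.length := by
    cases l₁ with
    | nil => simp at h₁
    | cons a t => simp
  have hlt : n % l₁.length < l₁.length := Nat.mod_lt _ hpos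
  rw [← List.rotate_mod] at h₂ ⊢
  rw [List.head?_rotate hlt] at h₂
  have h₁' : l₁[0]? = some d0 := by
    cases l₁ with
    | nil => simp at h₁
    | cons a t => simpa using h₁
  have h0 : n % l₁.length = 0 := (List.getElem?_inj hlt hn).1 (h₂.trans h₁'.symm)
  rw [h0, List.rotate_zero]

lemma mem_d0 {l : List D} (h : IsComplexPolycubeCorner l) : d0 ∈ l := by
  have hcard : l.toFinset = (Finset.univ : Finset D) := by
    apply Finset.eq_univ_of_card
    rw [List.toFinset_card_of_nodup h.2.1, h.1]
    decide
  rw [← List.mem_toFinset, hcard]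
  exact Finset.mem_univ _

/-- Canonical representative of each rotation class. -/
def canon (l : List D) : List D :=
  l.rotate (@List.idxOf D instBEqOfDecidableEq d0 l)

lemma canon_isRotated (l : List D) : l.IsRotated (canon l) := ⟨_, rfl⟩

lemma canon_head {l : List D} (h : IsComplexPolycubeCorner l) :
    (canon l).head? = some d0 := by
  have hm : d0 ∈ l := mem_d0 h
  have hlt : @List.idxOf D instBEqOfDecidableEq d0 l < l.length :=
    (@List.idxOf_lt_length_iff D instBEqOfDecidableEq _ _ _).2 hm
  rw [canon, List.head?_rotate hlt, List.getElem?_eq_getElem hlt,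
    @List.getElem_idxOf D instBEqOfDecidableEq _ _ _ hlt]

lemma canon_eq_of_isRotated {l₁ l₂ : List D} (h₁ : IsComplexPolycubeCorner l₁)
    (h₂ : IsComplexPolycubeCorner l₂) (h : l₁.IsRotated l₂) :
    canon l₁ = canon l₂ := by
  refine canon_unique ?_ ((canon_isRotated l₁).nodup_iff.1 h₁.2.1)
    (canon_head h₁) (canon_head h₂)
  exact (canon_isRotated l₁).symm.trans (h.trans (canon_isRotated l₂))

def Canon := {l : List D // IsComplexPolycubeCorner l ∧ l.head? = some d0}

def s : Setoid {l : List D // IsComplexPolycubeCorner l} :=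
  Setoid.comap (fun l => l.val) (List.IsRotated.setoid D)

def quotEquivCanon : Quotient s ≃ Canon where
  toFun := Quotient.lift
    (fun l : {l : List D // IsComplexPolycubeCorner l} =>
      (⟨canon l.val, P_rot l.2 (canon_isRotated l.val), canon_head l.2⟩ : Canon))
    (by
      rintro ⟨l₁, h₁⟩ ⟨l₂, h₂⟩ h
      exact Subtype.ext (canon_eq_of_isRotated h₁ h₂ h))
  invFun := fun c => Quotient.mk s ⟨c.val, c.2.1⟩
  left_inv := by
    refine Quotient.ind ?_
    rintro ⟨l, hl⟩
    exact Quotient.sound (show (canon l).IsRotated l from (canon_isRotated l).symm)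
  right_inv := by
    rintro ⟨l, hl, hh⟩
    refine Subtype.ext ?_
    exact canon_unique (canon_isRotated l).symm
      ((canon_isRotated l).nodup_iff.1 hl.2.1) (canon_head hl) hh

def goodList : List (List D) := allSix.permutations'.filter p

lemma goodList_nodup : goodList.Nodup := by
  apply List.Nodup.filter
  exact (List.permutations_perm_permutations' allSix).nodup_iff.1
    (List.nodup_permutations allSix (by decide))

def goodFinset : Finset (List D) :=
  ⟨(goodList : Multiset (List D)), Multiset.coe_nodup.2 goodList_nodup⟩

lemma mem_goodFinset (l : List D) :
    l ∈ goodFinset ↔ IsComplexPolycubeCorner l ∧ l.head? = some d0 := by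
  have : l ∈ goodFinset ↔ l ∈ goodList := Iff.rfl
  rw [this, goodList, List.mem_filter, List.mem_permutations', p_iff, iff_dec]
  have hA : allSix.Nodup := by decide
  constructor
  · rintro ⟨hp, hh, hc⟩
    exact ⟨⟨hp.length_eq.trans (by decide), hp.nodup_iff.2 hA, hc⟩, hh⟩
  · rintro ⟨⟨hlen, hnd, hc⟩, hh⟩
    refine ⟨List.perm_of_nodup_nodup_toFinset_eq hnd hA ?_, hh, hc⟩
    have h1 : l.toFinset = (Finset.univ : Finset D) := by
      apply Finset.eq_univ_of_card
      rw [List.toFinset_card_of_nodup hnd, hlen]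
      decide
    have h2 : allSix.toFinset = (Finset.univ : Finset D) := by decide
    rw [h1, h2]

def canonEquivGood : Canon ≃ {l : List D // l ∈ goodFinset} :=
  Equiv.subtypeEquivRight (fun l => (mem_goodFinset l).symm)

set_option maxRecDepth 100000 in
lemma goodList_length : goodList.length = 32 := by decide

end CPCaux

/-- There are exactly 32 complex polycube corner configurations (with exactly
6 incident edges) up to cyclic rotation. -/
theorem card_complex_polycube_corners_eq_32 :
    Nat.card (Quotient (Setoid.comap
      (fun l : {l : List (Fin 3 × Bool) // IsComplexPolycubeCorner l} => l.val)
      (List.IsRotated.setoid (Fin 3 × Bool)))) = 32 := by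
  have e := CPCaux.quotEquivCanon.trans CPCaux.canonEquivGood
  rw [show (Setoid.comap
      (fun l : {l : List (Fin 3 × Bool) // IsComplexPolycubeCorner l} => l.val)
      (List.IsRotated.setoid (Fin 3 × Bool))) = CPCaux.s from rfl]
  rw [Nat.card_congr e, Nat.card_eq_finsetCard]
  show CPCaux.goodList.length = 32
  exact CPCaux.goodList_length
end
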